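/- Let f : ℝⁿ → ℝ ∪ {+∞} be a proper convex function that is symmetric (f(x) = f(Px) for every n×n permutation matrix P), with associated spectral vector cone K_f and spectral matrix cone K_F. Then for every (t, v, X) ∈ ℝ × ℝ × Sⁿ one has (t, v, X) ∈ K_F if and only if (t, v, λ(X)) ∈ K_f, where λ(X) is the vector of eigenvalues of X in nonincreasing order. -/

import Mathlib

set_option maxHeartbeats 1000000

open Matrix Finset

/-- The entries of `x` sorted in nonincreasing order. -/
noncomputable def sortDesc {n : ℕ} (x : Fin n → ℝ) : Fin n → ℝ :=
  fun i => (x ∘ Tuple.sort x) i.rev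

open Classical in
/-- The eigenvalues of a real symmetric matrix in nonincreasing order
(junk value `0` if the matrix is not symmetric). -/
noncomputable def eigsDesc {n : ℕ} (X : Matrix (Fin n) (Fin n) ℝ) : Fin n → ℝ :=
  if h : X.IsHermitian then sortDesc h.eigenvalues else 0

/-- The spectral vector cone `K_f` associated with the proper convex function with
value `f` on its domain `S` (and `+∞` outside `S`). -/
def vecCone {n : ℕ} (S : Set (Fin n → ℝ)) (f : (Fin n → ℝ) → ℝ) :
    Set (ℝ × ℝ × (Fin n → ℝ)) :=
  closure {p | 0 < p.2.1 ∧ p.2.1⁻¹ • p.2.2 ∈ S ∧ p.2.1 * f (p.2.1⁻¹ • p.2.2) ≤ p.1}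

/-- The spectral matrix cone `K_F`, where `F X = f (λ(X))` with `λ(X)` the eigenvalues
of the symmetric matrix `X` in nonincreasing order. -/
noncomputable def matCone {n : ℕ} (S : Set (Fin n → ℝ)) (f : (Fin n → ℝ) → ℝ) :
    Set (ℝ × ℝ × Matrix (Fin n) (Fin n) ℝ) :=
  closure {p | p.2.2.IsHermitian ∧ 0 < p.2.1 ∧ p.2.1⁻¹ • eigsDesc p.2.2 ∈ S ∧
    p.2.1 * f (p.2.1⁻¹ • eigsDesc p.2.2) ≤ p.1}

section AuxSort

open Polynomial

variable {n : ℕ}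

lemma exists_perm_sortDesc (x : Fin n → ℝ) :
    ∃ σ : Equiv.Perm (Fin n), sortDesc x = x ∘ ⇑σ :=
  ⟨(Fin.revPerm).trans (Tuple.sort x), rfl⟩

lemma sortDesc_antitone (x : Fin n → ℝ) : Antitone (sortDesc x) :=
  fun _ _ hij => Tuple.monotone_sort x (Fin.rev_le_rev.mpr hij)

lemma eq_sortDesc_of_antitone {x y : Fin n → ℝ} (hy : Antitone y)
    (σ : Equiv.Perm (Fin n)) (h : y = x ∘ ⇑σ) : y = sortDesc x := by
  have hm : Monotone (x ∘ ⇑(Fin.revPerm.trans σ)) := by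
    intro i j hij
    have := hy (Fin.rev_le_rev.mpr hij)
    simpa [h] using this
  have hkey := Tuple.unique_monotone hm (Tuple.monotone_sort x)
  funext i
  have := congrFun hkey i.rev
  simp only [Function.comp_apply, Equiv.trans_apply, Fin.revPerm_apply, Fin.rev_rev] at this
  rw [h]
  simpa [sortDesc] using this

lemma sortDesc_eq_of_perm_list {x y : Fin n → ℝ}
    (h : List.Perm (List.ofFn x) (List.ofFn y)) : sortDesc x = sortDesc y := by
  have h1 : List.ofFn (x ∘ ⇑(Tuple.sort x)) = List.ofFn (y ∘ ⇑(Tuple.sort y)) := by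
    refine List.Perm.eq_of_sortedLE (Tuple.monotone_sort x).sortedLE_ofFn
      (Tuple.monotone_sort y).sortedLE_ofFn ?_
    exact (((Tuple.sort x).ofFn_comp_perm x).trans h).trans
      ((Tuple.sort y).ofFn_comp_perm y).symm
  have := List.ofFn_injective h1
  funext i
  simpa [sortDesc] using congrFun this i.rev

lemma sortDesc_comp_perm (x : Fin n → ℝ) (σ : Equiv.Perm (Fin n)) :
    sortDesc (x ∘ ⇑σ) = sortDesc x :=
  sortDesc_eq_of_perm_list (σ.ofFn_comp_perm x)

lemma charpoly_diagonal' (d : Fin n → ℝ) :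
    (Matrix.diagonal d).charpoly = ∏ i, (Polynomial.X - Polynomial.C (d i)) := by
  have h : charmatrix (diagonal d) = diagonal (fun i => (X : ℝ[X]) - C (d i)) := by
    ext i j
    by_cases hij : i = j
    · subst hij; simp [charmatrix_apply_eq]
    · simp [charmatrix_apply_ne _ _ _ hij, diagonal_apply_ne _ hij]
  rw [Matrix.charpoly, h, det_diagonal]

lemma charpoly_conj' (A U V : Matrix (Fin n) (Fin n) ℝ) (h1 : U * V = 1) :
    (U * A * V).charpoly = A.charpoly := by
  have hmap1 : (1 : Matrix (Fin n) (Fin n) ℝ).map (C : ℝ → ℝ[X]) = 1 :=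
    Matrix.map_one _ (map_zero C) (map_one C)
  have hUV : U.map (C : ℝ → ℝ[X]) * V.map C = 1 := by
    rw [← Matrix.map_mul (f := (C : ℝ →+* ℝ[X])), h1]; exact hmap1
  have hcomm := Matrix.scalar_commute (n := Fin n) (X : ℝ[X]) (fun r' => Commute.all _ _)
    (U.map C)
  have hchar : U.map (C : ℝ → ℝ[X]) * charmatrix A * V.map C = charmatrix (U * A * V) := by
    rw [charmatrix, charmatrix]
    simp only [RingHom.mapMatrix_apply]
    rw [Matrix.mul_sub, Matrix.sub_mul]
    congr 1
    · rw [← hcomm.eq, mul_assoc, hUV, mul_one]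
    · rw [← Matrix.map_mul (f := (C : ℝ →+* ℝ[X])), ← Matrix.map_mul (f := (C : ℝ →+* ℝ[X]))]
  have hdet : (U.map (C : ℝ → ℝ[X])).det * (V.map C).det = 1 := by
    rw [← det_mul, hUV, det_one]
  rw [Matrix.charpoly, Matrix.charpoly, ← hchar, det_mul, det_mul]
  calc (U.map (C : ℝ → ℝ[X])).det * A.charmatrix.det * (V.map C).det
      = A.charmatrix.det * ((U.map (C : ℝ → ℝ[X])).det * (V.map C).det) := by ring
    _ = A.charmatrix.det := by rw [hdet, mul_one]

lemma eigsDesc_pos {X : Matrix (Fin n) (Fin n) ℝ} (hX : X.IsHermitian) :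
    eigsDesc X = sortDesc hX.eigenvalues := by
  rw [eigsDesc, dif_pos hX]

lemma prod_X_sub_C_eq (a : Fin n → ℝ) :
    (Multiset.map (fun r => Polynomial.X - Polynomial.C r) (↑(List.ofFn a) : Multiset ℝ)).prod
      = ∏ i, (Polynomial.X - Polynomial.C (a i)) := by
  rw [Multiset.map_coe, Multiset.prod_coe, List.map_ofFn, List.prod_ofFn]; rfl

lemma spectral_real {X : Matrix (Fin n) (Fin n) ℝ} (hX : X.IsHermitian) :
    X = (hX.eigenvectorUnitary : Matrix (Fin n) (Fin n) ℝ) * diagonal hX.eigenvalues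
        * star (hX.eigenvectorUnitary : Matrix (Fin n) (Fin n) ℝ) := by
  have h := hX.spectral_theorem
  simpa using h

lemma eigsDesc_eq_of_conj {X : Matrix (Fin n) (Fin n) ℝ} (hX : X.IsHermitian)
    (d : Fin n → ℝ) (U : Matrix (Fin n) (Fin n) ℝ) (hU : U ∈ Matrix.unitaryGroup (Fin n) ℝ)
    (hXU : X = U * Matrix.diagonal d * star U) : eigsDesc X = sortDesc d := by
  have h1 : X.charpoly = ∏ i, (Polynomial.X - Polynomial.C (d i)) := by
    rw [hXU, charpoly_conj' _ _ _ (mem_unitaryGroup_iff.mp hU), charpoly_diagonal']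
  have h2 : X.charpoly = ∏ i, (Polynomial.X - Polynomial.C (hX.eigenvalues i)) := by
    conv_lhs => rw [spectral_real hX]
    rw [charpoly_conj' _ _ _ (mem_unitaryGroup_iff.mp hX.eigenvectorUnitary.2),
      charpoly_diagonal']
  have e1 := Polynomial.roots_multiset_prod_X_sub_C (↑(List.ofFn hX.eigenvalues) : Multiset ℝ)
  have e2 := Polynomial.roots_multiset_prod_X_sub_C (↑(List.ofFn d) : Multiset ℝ)
  rw [prod_X_sub_C_eq, ← h2] at e1
  rw [prod_X_sub_C_eq, ← h1] at e2
  have key : List.Perm (List.ofFn hX.eigenvalues) (List.ofFn d) :=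
    Multiset.coe_eq_coe.mp (e1.symm.trans e2)
  rw [eigsDesc_pos hX, sortDesc_eq_of_perm_list key]

end AuxSort

/-- For a proper convex symmetric function `f` (value `f` on its
domain `S`, `+∞` outside) and a symmetric matrix `X`, membership of `(t, v, X)` in the
spectral matrix cone `K_F` is equivalent to membership of `(t, v, λ(X))` in the spectral
vector cone `K_f`, where `λ(X)` is the vector of eigenvalues of `X` in nonincreasing
order. -/
theorem stmt2 {n : ℕ} (S : Set (Fin n → ℝ)) (f : (Fin n → ℝ) → ℝ)
    (hproper : S.Nonempty) (hconv : ConvexOn ℝ S f)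
    (hsymm : ∀ (e : Equiv.Perm (Fin n)) (x : Fin n → ℝ), x ∈ S →
      (x ∘ ⇑e) ∈ S ∧ f (x ∘ ⇑e) = f x)
    (t v : ℝ) (X : Matrix (Fin n) (Fin n) ℝ) (hX : X.IsHermitian) :
    (t, v, X) ∈ matCone S f ↔ (t, v, eigsDesc X) ∈ vecCone S f := by
  classical
  set V₀ : Set (ℝ × ℝ × (Fin n → ℝ)) :=
    {p | 0 < p.2.1 ∧ p.2.1⁻¹ • p.2.2 ∈ S ∧ p.2.1 * f (p.2.1⁻¹ • p.2.2) ≤ p.1} with hV₀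
  set M₀ : Set (ℝ × ℝ × Matrix (Fin n) (Fin n) ℝ) :=
    {p | p.2.2.IsHermitian ∧ 0 < p.2.1 ∧ p.2.1⁻¹ • eigsDesc p.2.2 ∈ S ∧
      p.2.1 * f (p.2.1⁻¹ • eigsDesc p.2.2) ≤ p.1} with hM₀
  have hmc : matCone S f = closure M₀ := rfl
  have hvc : vecCone S f = closure V₀ := rfl
  have hVmem : ∀ (w : ℝ) (x : Fin n → ℝ), w⁻¹ • x ∈ S →
      (w⁻¹ • sortDesc x ∈ S ∧ f (w⁻¹ • sortDesc x) = f (w⁻¹ • x)) := by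
    intro w x hSx
    obtain ⟨ρ, hρ⟩ := exists_perm_sortDesc x
    have hcomp : w⁻¹ • sortDesc x = (w⁻¹ • x) ∘ ⇑ρ := by
      funext i; simp [hρ]
    rw [hcomp]
    exact hsymm ρ (w⁻¹ • x) hSx
  constructor
  · -- forward direction
    intro hmem
    rw [hmc] at hmem
    rw [hvc]
    haveI : FirstCountableTopology (Matrix (Fin n) (Fin n) ℝ) :=
      inferInstanceAs (FirstCountableTopology (Fin n → Fin n → ℝ))
    obtain ⟨u, hu, hulim⟩ := mem_closure_iff_seq_limit.mp hmem
    have ht : Filter.Tendsto (fun k => (u k).1) Filter.atTop (nhds t) :=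
      (continuous_fst.tendsto _).comp hulim
    have hv : Filter.Tendsto (fun k => (u k).2.1) Filter.atTop (nhds v) :=
      ((continuous_fst.comp continuous_snd).tendsto _).comp hulim
    have hY : Filter.Tendsto (fun k => (u k).2.2) Filter.atTop (nhds X) :=
      ((continuous_snd.comp continuous_snd).tendsto _).comp hulim
    have hH : ∀ k, ((u k).2.2).IsHermitian := fun k => (hu k).1
    set W : ℕ → Matrix (Fin n) (Fin n) ℝ :=
      fun k => ((hH k).eigenvectorUnitary : Matrix (Fin n) (Fin n) ℝ) with hWdef
    set μ : ℕ → Fin n → ℝ := fun k => (hH k).eigenvalues with hmudef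
    have hKB : (Matrix.unitaryGroup (Fin n) ℝ : Set (Matrix (Fin n) (Fin n) ℝ)) ⊆
        {M : Matrix (Fin n) (Fin n) ℝ | ∀ i j, M i j ∈ Set.Icc (-1 : ℝ) 1} := by
      intro Uu hUu i j
      have h1 : (Uu * star Uu) i i = 1 := by
        rw [Matrix.mem_unitaryGroup_iff.mp hUu]; simp
      have h2 : ∑ l, Uu i l * Uu i l = 1 := by
        simpa [Matrix.mul_apply, Matrix.star_apply] using h1
      have h3 : Uu i j * Uu i j ≤ 1 := by
        rw [← h2]
        exact Finset.single_le_sum (f := fun l => Uu i l * Uu i l) (fun l _ => mul_self_nonneg _) (Finset.mem_univ j)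
      exact Set.mem_Icc.mpr (abs_le.mp (abs_le_one_iff_mul_self_le_one.mpr h3))
    have hBcomp :
        IsCompact {M : Matrix (Fin n) (Fin n) ℝ | ∀ i j, M i j ∈ Set.Icc (-1 : ℝ) 1} := by
      have he : {M : Matrix (Fin n) (Fin n) ℝ | ∀ i j, M i j ∈ Set.Icc (-1 : ℝ) 1} =
          Set.pi Set.univ (fun _ : Fin n => Set.pi Set.univ fun _ : Fin n =>
            Set.Icc (-1 : ℝ) 1) := by
        ext M
        exact ⟨fun h i _ j _ => h i j, fun h i j => h i (Set.mem_univ i) j (Set.mem_univ j)⟩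
      rw [he]
      exact isCompact_univ_pi fun _ => isCompact_univ_pi fun _ => isCompact_Icc
    have hKclosed :
        IsClosed (Matrix.unitaryGroup (Fin n) ℝ : Set (Matrix (Fin n) (Fin n) ℝ)) := by
      have he : (Matrix.unitaryGroup (Fin n) ℝ : Set (Matrix (Fin n) (Fin n) ℝ)) =
          (fun M : Matrix (Fin n) (Fin n) ℝ => M * star M) ⁻¹' {1} := by
        ext M
        simp [Matrix.mem_unitaryGroup_iff]
      rw [he]
      exact IsClosed.preimage (continuous_id.matrix_mul continuous_id.star) isClosed_singleton
    have hKcomp : IsCompact (Matrix.unitaryGroup (Fin n) ℝ : Set (Matrix (Fin n) (Fin n) ℝ)) :=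
      hBcomp.of_isClosed_subset hKclosed hKB
    obtain ⟨Q, hQK, φ, hφ, hQlim⟩ := hKcomp.tendsto_subseq
      (x := W) (fun k => (hH k).eigenvectorUnitary.2)
    have hYφ : Filter.Tendsto (fun k => (u (φ k)).2.2) Filter.atTop (nhds X) :=
      hY.comp hφ.tendsto_atTop
    have h1 : Filter.Tendsto (fun k => W (φ k)) Filter.atTop (nhds Q) := hQlim
    have hD : Filter.Tendsto (fun k => star (W (φ k)) * (u (φ k)).2.2 * W (φ k)) Filter.atTop
        (nhds (star Q * X * Q)) :=
      (h1.star.mul hYφ).mul h1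
    have hDk : ∀ k, star (W k) * (u k).2.2 * W k = Matrix.diagonal (μ k) := by
      intro k
      have h7 := (hH k).conjStarAlgAut_star_eigenvectorUnitary
      simpa [RCLike.ofReal_real_eq_id] using h7
    set Z : Matrix (Fin n) (Fin n) ℝ := star Q * X * Q with hZdef
    have hentry : ∀ i j, Filter.Tendsto (fun k => Matrix.diagonal (μ (φ k)) i j) Filter.atTop
        (nhds (Z i j)) := by
      intro i j
      have h8 := ((continuous_id.matrix_elem i j).tendsto (Z)).comp hD
      simp only [hDk] at h8
      exact h8
    set d : Fin n → ℝ := fun i => Z i i with hddef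
    have hZdiag : Z = Matrix.diagonal d := by
      ext i j
      by_cases hij : i = j
      · subst hij; simp [hddef]
      · have h0 : Filter.Tendsto (fun _ : ℕ => (0 : ℝ)) Filter.atTop (nhds (Z i j)) := by
          have h9 := hentry i j
          simpa [Matrix.diagonal_apply_ne _ hij] using h9
        rw [Matrix.diagonal_apply_ne _ hij]
        exact tendsto_nhds_unique h0 tendsto_const_nhds
    have hq1 : Q * star Q = 1 := Matrix.mem_unitaryGroup_iff.mp hQK
    have hXQ : X = Q * Matrix.diagonal d * star Q := by
      have h5 : Q * Z * star Q = X := by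
        rw [hZdef]
        simp only [← mul_assoc]
        rw [hq1, one_mul, mul_assoc, hq1, mul_one]
      rw [← h5, hZdiag]
    have heigsX : eigsDesc X = sortDesc d := eigsDesc_eq_of_conj hX d Q hQK hXQ
    have hfreq : ∃ ρ₀ : Equiv.Perm (Fin n), ∃ᶠ k in Filter.atTop,
        Tuple.sort (μ (φ k)) = ρ₀ := by
      by_contra hc
      push_neg at hc
      have hev : ∀ᶠ k in Filter.atTop, ∀ ρ₀ : Equiv.Perm (Fin n), Tuple.sort (μ (φ k)) ≠ ρ₀ :=
        Filter.eventually_all.mpr fun ρ₀ => (hc ρ₀)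
      obtain ⟨k, hk⟩ := hev.exists
      exact hk _ rfl
    obtain ⟨ρ₀, hρ₀⟩ := hfreq
    obtain ⟨ψ, hψ, hψeq⟩ := Filter.extraction_of_frequently_atTop hρ₀
    have hdlim : ∀ a : Fin n, Filter.Tendsto (fun k => μ (φ (ψ k)) a) Filter.atTop
        (nhds (d a)) := by
      intro a
      have h6 := (hentry a a).comp hψ.tendsto_atTop
      simp only [Function.comp_def, Matrix.diagonal_apply_eq] at h6
      exact h6
    have heig_eq : ∀ (k : ℕ) (i : Fin n), eigsDesc ((u (φ (ψ k))).2.2) i = μ (φ (ψ k)) (ρ₀ i.rev) := by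
      intro k i
      rw [eigsDesc_pos (hH _)]
      show μ (φ (ψ k)) (Tuple.sort (μ (φ (ψ k))) i.rev) = _
      rw [hψeq k]
    have hylim : ∀ i : Fin n, Filter.Tendsto (fun k => eigsDesc ((u (φ (ψ k))).2.2) i) Filter.atTop
        (nhds (d (ρ₀ i.rev))) := by
      intro i
      simp only [heig_eq]
      exact hdlim (ρ₀ i.rev)
    have hyanti : Antitone (fun i : Fin n => d (ρ₀ i.rev)) := by
      intro i j hij
      refine le_of_tendsto_of_tendsto' (hylim j) (hylim i) fun k => ?_
      have h10 : eigsDesc ((u (φ (ψ k))).2.2) = sortDesc (μ (φ (ψ k))) := eigsDesc_pos (hH _)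
      rw [h10]
      exact sortDesc_antitone _ hij
    have hyd : (fun i : Fin n => d (ρ₀ i.rev)) = sortDesc d :=
      eq_sortDesc_of_antitone hyanti (Fin.revPerm.trans ρ₀) rfl
    have hvecmem : ∀ k,
        ((u (φ (ψ k))).1, (u (φ (ψ k))).2.1, eigsDesc ((u (φ (ψ k))).2.2)) ∈ V₀ :=
      fun k => ⟨(hu _).2.1, (hu _).2.2.1, (hu _).2.2.2⟩
    have hvlim : Filter.Tendsto (fun k => ((u (φ (ψ k))).1, (u (φ (ψ k))).2.1,
        eigsDesc ((u (φ (ψ k))).2.2))) Filter.atTop (nhds (t, v, eigsDesc X)) := by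
      refine Filter.Tendsto.prodMk_nhds (ht.comp (hφ.comp hψ).tendsto_atTop)
        (Filter.Tendsto.prodMk_nhds (hv.comp (hφ.comp hψ).tendsto_atTop) ?_)
      rw [heigsX, ← hyd]
      exact tendsto_pi_nhds.mpr fun i => hylim i
    exact mem_closure_of_tendsto hvlim (Filter.Eventually.of_forall hvecmem)
  · intro hmem
    rw [hvc] at hmem
    rw [hmc]
    obtain ⟨σ, hσ⟩ := exists_perm_sortDesc hX.eigenvalues
    set U : Matrix (Fin n) (Fin n) ℝ := (hX.eigenvectorUnitary : Matrix (Fin n) (Fin n) ℝ)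
      with hUdef
    have hμ : hX.eigenvalues = (eigsDesc X) ∘ ⇑σ⁻¹ := by
      funext i
      rw [eigsDesc_pos hX, hσ]
      simp
    set L : ℝ × ℝ × (Fin n → ℝ) → ℝ × ℝ × Matrix (Fin n) (Fin n) ℝ :=
      fun p => (p.1, p.2.1, U * Matrix.diagonal (p.2.2 ∘ ⇑σ⁻¹) * star U) with hLdef
    have hLcont : Continuous L := by
      refine continuous_fst.prodMk ((continuous_fst.comp continuous_snd).prodMk ?_)
      exact (continuous_const.matrix_mul ((continuous_pi fun i =>
        (continuous_apply (σ⁻¹ i)).comp (continuous_snd.comp continuous_snd)).matrix_diagonal)).matrix_mul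
        continuous_const
    have hLX : L (t, v, eigsDesc X) = (t, v, X) := by
      simp only [hLdef]
      refine Prod.ext rfl (Prod.ext rfl ?_)
      show U * Matrix.diagonal (eigsDesc X ∘ ⇑σ⁻¹) * star U = X
      rw [← hμ]
      exact (spectral_real hX).symm
    have himg : L '' V₀ ⊆ M₀ := by
      rintro _ ⟨⟨s, w, x⟩, hp, rfl⟩
      obtain ⟨hw, hSx, hfx⟩ : 0 < w ∧ w⁻¹ • x ∈ S ∧ w * f (w⁻¹ • x) ≤ s := hp
      have hherm : (U * Matrix.diagonal (x ∘ ⇑σ⁻¹) * star U).IsHermitian := by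
        rw [Matrix.star_eq_conjTranspose]
        exact isHermitian_mul_mul_conjTranspose U (isHermitian_diagonal _)
      have heig : eigsDesc (U * Matrix.diagonal (x ∘ ⇑σ⁻¹) * star U) = sortDesc x := by
        rw [eigsDesc_eq_of_conj hherm (x ∘ ⇑σ⁻¹) U hX.eigenvectorUnitary.2 rfl,
          sortDesc_comp_perm]
      obtain ⟨hmemS, hfeq⟩ := hVmem w x hSx
      refine ⟨hherm, hw, ?_, ?_⟩
      · show w⁻¹ • eigsDesc (U * Matrix.diagonal (x ∘ ⇑σ⁻¹) * star U) ∈ S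
        rw [heig]; exact hmemS
      · show w * f (w⁻¹ • eigsDesc (U * Matrix.diagonal (x ∘ ⇑σ⁻¹) * star U)) ≤ s
        rw [heig, hfeq]; exact hfx
    have : L (t, v, eigsDesc X) ∈ closure M₀ :=
      closure_mono himg (image_closure_subset_closure_image hLcont ⟨_, hmem, rfl⟩)
    rwa [hLX] at this
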